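/- Let (x_1, x_2) take the value (0,0) with probability p_0, (1,0) with probability p_1, and (0,1) with probability p_2, where p_0 + p_1 + p_2 = 1 and p_1, p_2 > 0, and let y = f(x_1,x_2) take corresponding values y_0, y_1, y_2 with σ² := Var(y) > 0. Write ȳ_1 = y_1 − y_0 and ȳ_2 = y_2 − y_0. Then the Shapley value φ_1 of variable 1 satisfies φ_1/σ² = (1/2)(1 + (p_0/σ²) · (p_1(1−p_1)ȳ_1² − p_2(1−p_2)ȳ_2²)/((1−p_1)(1−p_2))). -/

import Mathlib

open MeasureTheory ProbabilityTheory

/-- The three-point measure on `Fin 3` putting mass `p₀, p₁, p₂` on `0, 1, 2`;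
point `i = 0` represents `(x₁,x₂) = (0,0)`, `i = 1` represents `(1,0)` and
`i = 2` represents `(0,1)`, so that the point `(1,1)` is a hole. -/
noncomputable def threePt (p₀ p₁ p₂ : ℝ) : Measure (Fin 3) :=
  ENNReal.ofReal p₀ • Measure.dirac 0 + ENNReal.ofReal p₁ • Measure.dirac 1
    + ENNReal.ofReal p₂ • Measure.dirac 2

/-- The first input: `x₁ = 1` exactly on the atom `(1,0)`. -/
noncomputable def xOne : Fin 3 → ℝ := ![0, 1, 0]

/-- The second input: `x₂ = 1` exactly on the atom `(0,1)`. -/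
noncomputable def xTwo : Fin 3 → ℝ := ![0, 0, 1]

/-- The Shapley value of variable `1` in the bivariate game `val u = Var(E[Y ∣ x_u])`:
`φ₁ = (1/2)(Var(E[Y ∣ x₁]) + Var(Y) - Var(E[Y ∣ x₂]))`. -/
noncomputable def phiOne {Ω : Type*} [MeasurableSpace Ω] (μ : Measure Ω)
    (x₁ x₂ : Ω → ℝ) (Y : Ω → ℝ) : ℝ :=
  (1 / 2) * (variance (μ[Y | MeasurableSpace.comap x₁ Real.measurableSpace]) μ
    + variance Y μ
    - variance (μ[Y | MeasurableSpace.comap x₂ Real.measurableSpace]) μ)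

/-! ### Auxiliary lemmas -/

instance ofRealSmul_finite' {α : Type*} [MeasurableSpace α] (p : ℝ) (μ : Measure α)
    [IsFiniteMeasure μ] : IsFiniteMeasure (ENNReal.ofReal p • μ) := by
  constructor; simp [ENNReal.mul_lt_top, ENNReal.ofReal_lt_top, measure_lt_top]

instance threePt_finite' (p₀ p₁ p₂ : ℝ) : IsFiniteMeasure (threePt p₀ p₁ p₂) := by
  rw [threePt]; infer_instance

lemma threePt_prob {p₀ p₁ p₂ : ℝ} (hp₀ : 0 ≤ p₀) (hp₁ : 0 ≤ p₁) (hp₂ : 0 ≤ p₂)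
    (hsum : p₀ + p₁ + p₂ = 1) : IsProbabilityMeasure (threePt p₀ p₁ p₂) := by
  constructor
  simp only [threePt, Measure.add_apply, Measure.smul_apply, Measure.dirac_apply_of_mem
    (Set.mem_univ _), smul_eq_mul, mul_one]
  rw [← ENNReal.ofReal_add hp₀ hp₁, ← ENNReal.ofReal_add (by linarith) hp₂, hsum,
    ENNReal.ofReal_one]

lemma intThree {a b c : ℝ} (ha : 0 ≤ a) (hb : 0 ≤ b) (hc : 0 ≤ c) (f : Fin 3 → ℝ) :
    ∫ x, f x ∂(ENNReal.ofReal a • Measure.dirac 0 + ENNReal.ofReal b • Measure.dirac 1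
      + ENNReal.ofReal c • Measure.dirac 2) = a * f 0 + b * f 1 + c * f 2 := by
  rw [integral_add_measure (Integrable.of_finite) (Integrable.of_finite),
    integral_add_measure (Integrable.of_finite) (Integrable.of_finite),
    integral_smul_measure, integral_smul_measure, integral_smul_measure,
    integral_dirac, integral_dirac, integral_dirac,
    ENNReal.toReal_ofReal ha, ENNReal.toReal_ofReal hb, ENNReal.toReal_ofReal hc]
  simp [smul_eq_mul]

lemma threePt_integral {p₀ p₁ p₂ : ℝ} (hp₀ : 0 ≤ p₀) (hp₁ : 0 ≤ p₁) (hp₂ : 0 ≤ p₂)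
    (f : Fin 3 → ℝ) :
    ∫ x, f x ∂(threePt p₀ p₁ p₂) = p₀ * f 0 + p₁ * f 1 + p₂ * f 2 :=
  intThree hp₀ hp₁ hp₂ f

open scoped Classical in
lemma threePt_setIntegral {p₀ p₁ p₂ : ℝ} (hp₀ : 0 ≤ p₀) (hp₁ : 0 ≤ p₁) (hp₂ : 0 ≤ p₂)
    (f : Fin 3 → ℝ) (s : Set (Fin 3)) :
    ∫ x in s, f x ∂(threePt p₀ p₁ p₂)
      = (if (0 : Fin 3) ∈ s then p₀ * f 0 else 0) + (if (1 : Fin 3) ∈ s then p₁ * f 1 else 0)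
        + (if (2 : Fin 3) ∈ s then p₂ * f 2 else 0) := by
  have key : ∀ (p : ℝ) (i : Fin 3),
      (ENNReal.ofReal p • Measure.dirac i).restrict s
        = ENNReal.ofReal (if i ∈ s then p else 0) • Measure.dirac i := by
    intro p i
    rw [Measure.restrict_smul, restrict_dirac]
    split_ifs <;> simp
  rw [threePt, Measure.restrict_add, Measure.restrict_add, key, key, key,
    intThree (by positivity) (by positivity) (by positivity)]
  split_ifs <;> simp

lemma variance_congr' {Ω : Type*} {m : MeasurableSpace Ω} {μ : Measure Ω} {X Y : Ω → ℝ}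
    (h : X =ᵐ[μ] Y) : variance X μ = variance Y μ := by
  unfold ProbabilityTheory.variance ProbabilityTheory.evariance
  rw [integral_congr_ae h, lintegral_congr_ae (h.mono fun ω hω => by rw [hω])]

lemma condexp_xOne {p₀ p₁ p₂ : ℝ} (hp₀ : 0 ≤ p₀) (hp₁ : 0 < p₁) (hp₂ : 0 < p₂)
    (y₀ y₁ y₂ : ℝ) :
    (fun i => (p₀ * y₀ + p₂ * y₂) / (p₀ + p₂)
        + (y₁ - (p₀ * y₀ + p₂ * y₂) / (p₀ + p₂)) * xOne i)
      =ᵐ[threePt p₀ p₁ p₂]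
        (threePt p₀ p₁ p₂)[![y₀, y₁, y₂] | MeasurableSpace.comap xOne Real.measurableSpace] := by
  classical
  set a : ℝ := (p₀ * y₀ + p₂ * y₂) / (p₀ + p₂) with ha
  have hm : MeasurableSpace.comap xOne Real.measurableSpace
      ≤ (inferInstance : MeasurableSpace (Fin 3)) := fun s _ => .of_discrete
  have hpc : p₀ + p₂ ≠ 0 := by positivity
  refine ae_eq_condExp_of_forall_setIntegral_eq hm Integrable.of_finite
    (fun s _ _ => Integrable.of_finite.integrableOn) ?_ ?_
  · rintro s ⟨t, ht, rfl⟩ -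
    rw [threePt_setIntegral hp₀ hp₁.le hp₂.le, threePt_setIntegral hp₀ hp₁.le hp₂.le]
    have h0 : ((0 : Fin 3) ∈ xOne ⁻¹' t) = ((0:ℝ) ∈ t) := by simp [xOne]
    have h1 : ((1 : Fin 3) ∈ xOne ⁻¹' t) = ((1:ℝ) ∈ t) := by simp [xOne]
    have h2 : ((2 : Fin 3) ∈ xOne ⁻¹' t) = ((0:ℝ) ∈ t) := by simp [xOne]
    rw [h0, h1, h2]
    have hx0 : xOne 0 = 0 := by simp [xOne]
    have hx1 : xOne 1 = 1 := by simp [xOne]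
    have hx2 : xOne 2 = 0 := by simp [xOne]
    have hY : (![y₀, y₁, y₂] : Fin 3 → ℝ) 0 = y₀ ∧ (![y₀, y₁, y₂] : Fin 3 → ℝ) 1 = y₁ ∧
        (![y₀, y₁, y₂] : Fin 3 → ℝ) 2 = y₂ := by constructor <;> simp
    rw [hx0, hx1, hx2, hY.1, hY.2.1, hY.2.2]
    have key : p₀ * (a + (y₁ - a) * 0) + p₂ * (a + (y₁ - a) * 0) = p₀ * y₀ + p₂ * y₂ := by
      rw [ha]; field_simp; ring
    split_ifs <;> simp <;> linarith
  · refine StronglyMeasurable.aestronglyMeasurable (Measurable.stronglyMeasurable ?_)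
    exact ((measurable_iff_comap_le.mpr le_rfl).const_mul (y₁ - a)).const_add a

lemma condexp_xTwo {p₀ p₁ p₂ : ℝ} (hp₀ : 0 ≤ p₀) (hp₁ : 0 < p₁) (hp₂ : 0 < p₂)
    (y₀ y₁ y₂ : ℝ) :
    (fun i => (p₀ * y₀ + p₁ * y₁) / (p₀ + p₁)
        + (y₂ - (p₀ * y₀ + p₁ * y₁) / (p₀ + p₁)) * xTwo i)
      =ᵐ[threePt p₀ p₁ p₂]
        (threePt p₀ p₁ p₂)[![y₀, y₁, y₂] | MeasurableSpace.comap xTwo Real.measurableSpace] := by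
  classical
  set b : ℝ := (p₀ * y₀ + p₁ * y₁) / (p₀ + p₁) with hb
  have hm : MeasurableSpace.comap xTwo Real.measurableSpace
      ≤ (inferInstance : MeasurableSpace (Fin 3)) := fun s _ => .of_discrete
  have hpc : p₀ + p₁ ≠ 0 := by positivity
  refine ae_eq_condExp_of_forall_setIntegral_eq hm Integrable.of_finite
    (fun s _ _ => Integrable.of_finite.integrableOn) ?_ ?_
  · rintro s ⟨t, ht, rfl⟩ -
    rw [threePt_setIntegral hp₀ hp₁.le hp₂.le, threePt_setIntegral hp₀ hp₁.le hp₂.le]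
    have h0 : ((0 : Fin 3) ∈ xTwo ⁻¹' t) = ((0:ℝ) ∈ t) := by simp [xTwo]
    have h1 : ((1 : Fin 3) ∈ xTwo ⁻¹' t) = ((0:ℝ) ∈ t) := by simp [xTwo]
    have h2 : ((2 : Fin 3) ∈ xTwo ⁻¹' t) = ((1:ℝ) ∈ t) := by simp [xTwo]
    rw [h0, h1, h2]
    have hx0 : xTwo 0 = 0 := by simp [xTwo]
    have hx1 : xTwo 1 = 0 := by simp [xTwo]
    have hx2 : xTwo 2 = 1 := by simp [xTwo]
    have hY : (![y₀, y₁, y₂] : Fin 3 → ℝ) 0 = y₀ ∧ (![y₀, y₁, y₂] : Fin 3 → ℝ) 1 = y₁ ∧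
        (![y₀, y₁, y₂] : Fin 3 → ℝ) 2 = y₂ := by constructor <;> simp
    rw [hx0, hx1, hx2, hY.1, hY.2.1, hY.2.2]
    have key : p₀ * (b + (y₂ - b) * 0) + p₁ * (b + (y₂ - b) * 0) = p₀ * y₀ + p₁ * y₁ := by
      rw [hb]; field_simp; ring
    split_ifs <;> simp <;> linarith
  · refine StronglyMeasurable.aestronglyMeasurable (Measurable.stronglyMeasurable ?_)
    exact ((measurable_iff_comap_le.mpr le_rfl).const_mul (y₂ - b)).const_add b

lemma variance_affine_xOne {p₀ p₁ p₂ : ℝ} (hp₀ : 0 ≤ p₀) (hp₁ : 0 ≤ p₁) (hp₂ : 0 ≤ p₂)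
    (hsum : p₀ + p₁ + p₂ = 1) (c d : ℝ) :
    variance (fun i => c + d * xOne i) (threePt p₀ p₁ p₂)
      = (p₀ * c ^ 2 + p₁ * (c + d) ^ 2 + p₂ * c ^ 2)
        - (p₀ * c + p₁ * (c + d) + p₂ * c) ^ 2 := by
  haveI := threePt_prob hp₀ hp₁ hp₂ hsum
  rw [variance_eq_sub MemLp.of_discrete]
  have h1 : ∫ x, ((fun i => c + d * xOne i) ^ 2) x ∂(threePt p₀ p₁ p₂)
      = p₀ * c ^ 2 + p₁ * (c + d) ^ 2 + p₂ * c ^ 2 := by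
    rw [threePt_integral hp₀ hp₁ hp₂]
    simp [xOne]
  have h2 : ∫ x, (fun i => c + d * xOne i) x ∂(threePt p₀ p₁ p₂)
      = p₀ * c + p₁ * (c + d) + p₂ * c := by
    rw [threePt_integral hp₀ hp₁ hp₂]
    simp [xOne]
  rw [h1, h2]

lemma variance_affine_xTwo {p₀ p₁ p₂ : ℝ} (hp₀ : 0 ≤ p₀) (hp₁ : 0 ≤ p₁) (hp₂ : 0 ≤ p₂)
    (hsum : p₀ + p₁ + p₂ = 1) (c d : ℝ) :
    variance (fun i => c + d * xTwo i) (threePt p₀ p₁ p₂)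
      = (p₀ * c ^ 2 + p₁ * c ^ 2 + p₂ * (c + d) ^ 2)
        - (p₀ * c + p₁ * c + p₂ * (c + d)) ^ 2 := by
  haveI := threePt_prob hp₀ hp₁ hp₂ hsum
  rw [variance_eq_sub MemLp.of_discrete]
  have h1 : ∫ x, ((fun i => c + d * xTwo i) ^ 2) x ∂(threePt p₀ p₁ p₂)
      = p₀ * c ^ 2 + p₁ * c ^ 2 + p₂ * (c + d) ^ 2 := by
    rw [threePt_integral hp₀ hp₁ hp₂]
    simp [xTwo]
  have h2 : ∫ x, (fun i => c + d * xTwo i) x ∂(threePt p₀ p₁ p₂)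
      = p₀ * c + p₁ * c + p₂ * (c + d) := by
    rw [threePt_integral hp₀ hp₁ hp₂]
    simp [xTwo]
  rw [h1, h2]

/-- Shapley effects for a distribution with a hole: `(x₁,x₂)` takes the values
`(0,0), (1,0), (0,1)` with probabilities `p₀, p₁, p₂` and `y` takes the corresponding
values `y₀, y₁, y₂`.  Writing `ȳⱼ = yⱼ - y₀`, the Shapley value of `x₁` satisfies
`φ₁/σ² = (1/2)(1 + (p₀/σ²) (p₁(1-p₁)ȳ₁² - p₂(1-p₂)ȳ₂²)/((1-p₁)(1-p₂)))`. -/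
theorem threePt_shapley (p₀ p₁ p₂ : ℝ) (hp₀ : 0 ≤ p₀) (hp₁ : 0 < p₁) (hp₂ : 0 < p₂)
    (hsum : p₀ + p₁ + p₂ = 1) (y₀ y₁ y₂ : ℝ)
    (hvar : 0 < variance ![y₀, y₁, y₂] (threePt p₀ p₁ p₂)) :
    phiOne (threePt p₀ p₁ p₂) xOne xTwo ![y₀, y₁, y₂]
        / variance ![y₀, y₁, y₂] (threePt p₀ p₁ p₂)
      = (1 / 2) * (1 + p₀ / variance ![y₀, y₁, y₂] (threePt p₀ p₁ p₂)
          * ((p₁ * (1 - p₁) * (y₁ - y₀) ^ 2 - p₂ * (1 - p₂) * (y₂ - y₀) ^ 2)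
            / ((1 - p₁) * (1 - p₂)))) := by
  rw [phiOne, (variance_congr' (condexp_xOne hp₀ hp₁ hp₂ y₀ y₁ y₂)).symm,
    (variance_congr' (condexp_xTwo hp₀ hp₁ hp₂ y₀ y₁ y₂)).symm,
    variance_affine_xOne hp₀ hp₁.le hp₂.le hsum,
    variance_affine_xTwo hp₀ hp₁.le hp₂.le hsum]
  set v := variance ![y₀, y₁, y₂] (threePt p₀ p₁ p₂) with hv
  have h1 : (1 : ℝ) - p₁ = p₀ + p₂ := by linarith
  have h2 : (1 : ℝ) - p₂ = p₀ + p₁ := by linarith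
  have hpc₁ : p₀ + p₂ ≠ 0 := by positivity
  have hpc₂ : p₀ + p₁ ≠ 0 := by positivity
  rw [h1, h2]
  rw [div_eq_iff hvar.ne']
  field_simp
  ring
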